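/- With W defined as the concatenation ENC(H₁ᶜ)·ORD(≺₁)ᴿ·ENC(H₂ᶜ)·⋯·ORD(≺_{n−1})ᴿ·ENC(H_nᶜ) (notation as follows), the word W contains every word of length n−1 over the alphabet {1,...,n} as a subsequence. -/
import Mathlib

lemma aux_sub : ∀ (w : List ℕ) (bs : List (List ℕ)),
    w.length ≤ bs.length → (∀ x ∈ w, ∀ b ∈ bs, x ∈ b) → w.Sublist bs.flatten := by
  intro w
  induction w with
  | nil => intro bs _ _; exact List.nil_sublist _
  | cons a w ih =>
    intro bs hlen hmem
    cases bs with
    | nil => simp at hlen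
    | cons b bs =>
      simp only [List.flatten_cons]
      have h1 : [a].Sublist b := List.singleton_sublist.2 (hmem a (by simp) b (by simp))
      have h2 : w.Sublist bs.flatten := by
        apply ih bs (by simpa using hlen)
        intro x hx c hc; exact hmem x (by simp [hx]) c (by simp [hc])
      simpa using h1.append h2

theorem stmt_13 (n : ℕ) (hn : 1 ≤ n)
    (H : ℕ → Finset ℕ) (hH : ∀ i, H i ⊆ Finset.Icc 1 n)
    (r : ℕ → ℕ → ℕ → Prop)
    (ord : ℕ → List ℕ)
    (hordp : ∀ j, (ord j).Perm ((List.range n).map (· + 1)))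
    (hords : ∀ j, (ord j).Pairwise (r j))
    (enc : ℕ → List ℕ)
    (hencd : ∀ i, (enc i).Nodup)
    (hencm : ∀ i x, x ∈ enc i ↔ x ∈ Finset.Icc 1 n \ H i)
    (W : List ℕ)
    (hW : W = enc 1 ++
      (List.range (n - 1)).flatMap (fun j => (ord (j + 1)).reverse ++ enc (j + 2))) :
    ∀ w : List ℕ, w.length = n - 1 → (∀ x ∈ w, x ∈ Finset.Icc 1 n) →
      w.Sublist W := by
  intro w hlen hmem
  subst hW
  apply List.Sublist.trans _ (List.sublist_append_right _ _)
  rw [List.flatMap_eq_foldl]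
  rw [show (List.range (n-1)).foldl (fun acc j => acc ++ ((ord (j+1)).reverse ++ enc (j+2))) [] =
      ((List.range (n-1)).map (fun j => (ord (j+1)).reverse ++ enc (j+2))).flatten from ?_]
  · apply aux_sub
    · simp [hlen]
    · intro x hx b hb
      simp only [List.mem_map, List.mem_range] at hb
      obtain ⟨j, _, rfl⟩ := hb
      have hx' := hmem x hx
      rw [Finset.mem_Icc] at hx'
      have : x ∈ ord (j+1) := (hordp (j+1)).mem_iff.2 (by
        simp only [List.mem_map, List.mem_range]
        exact ⟨x - 1, by omega, by omega⟩)
      simp [this]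
  · rw [← List.flatMap_eq_foldl]; simp [List.flatMap]
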